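/- Suppose that L has lower Matuszewska index at zero strictly bigger than −p, i.e., there exist a > −p and constants A, R₀ > 0 such that L(r₂) ≥ A (r₂/r₁)^a L(r₁) whenever 0 < r₁ < r₂ < R₀. Then there exist r₀ > 0 and constants c₁, c₂ > 0 such that c₁ L(r) ≤ h_p(r) ≤ c₂ L(r) for all 0 < r < r₀. -/

import Mathlib

open MeasureTheory ENNReal Set Filter Topology

/-- The concentration function `h_p(r) = ∫ min(1, |x|^p/r^p) ν(dx)`. -/
noncomputable def hpFun (d : ℕ) (p : ℝ) (ν : Measure (EuclideanSpace ℝ (Fin d))) (r : ℝ) :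
    ℝ≥0∞ :=
  ∫⁻ x, ENNReal.ofReal (min 1 (‖x‖ ^ p / r ^ p)) ∂ν

/-- The tail function `L(r) = ν({x : |x| > r})`. -/
noncomputable def LFun (d : ℕ) (ν : Measure (EuclideanSpace ℝ (Fin d))) (r : ℝ) : ℝ≥0∞ :=
  ν {x | r < ‖x‖}

/-- If `L` has lower Matuszewska index at zero strictly bigger than `-p`
(i.e. `L(r₂) ≥ A (r₂/r₁)^a L(r₁)` for `0 < r₁ < r₂ < R₀` with some `a > -p`, `A, R₀ > 0`),
then there exist `r₀ > 0` and `c₁, c₂ > 0` with `c₁ L(r) ≤ h_p(r) ≤ c₂ L(r)` for `0 < r < r₀`. -/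
theorem statement_0 (d : ℕ) (hd : 1 ≤ d) (p : ℝ) (hp1 : 1 ≤ p)
    (ν : Measure (EuclideanSpace ℝ (Fin d)))
    (hint : ∫⁻ x, ENNReal.ofReal (min 1 (‖x‖ ^ p)) ∂ν < ⊤)
    (a A R₀ : ℝ) (ha : -p < a) (hA : 0 < A) (hR₀ : 0 < R₀)
    (hMat : ∀ r₁ r₂ : ℝ, 0 < r₁ → r₁ < r₂ → r₂ < R₀ →
      ENNReal.ofReal (A * (r₂ / r₁) ^ a) * LFun d ν r₁ ≤ LFun d ν r₂) :
    ∃ r₀ > (0 : ℝ), ∃ c₁ > (0 : ℝ), ∃ c₂ > (0 : ℝ), ∀ r : ℝ, 0 < r → r < r₀ →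
      ENNReal.ofReal c₁ * LFun d ν r ≤ hpFun d p ν r ∧
      hpFun d p ν r ≤ ENNReal.ofReal c₂ * LFun d ν r := by
  have hp0 : (0 : ℝ) < p := lt_of_lt_of_le one_pos hp1
  have hpa : (0 : ℝ) < p + a := by linarith
  set q : ℝ := (2 : ℝ) ^ (-(p + a)) with hq
  have hq0 : 0 < q := Real.rpow_pos_of_pos two_pos _
  have hq1 : q < 1 := Real.rpow_lt_one_of_one_lt_of_neg one_lt_two (by linarith)
  have h1q : (0 : ℝ) < 1 - q := by linarith
  set C : ℝ := A⁻¹ * (2 : ℝ) ^ (-a) with hC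
  have hC0 : 0 < C := mul_pos (inv_pos.2 hA) (Real.rpow_pos_of_pos two_pos _)
  have hc2pos : (0 : ℝ) < 1 + C * (1 - q)⁻¹ :=
    add_pos one_pos (mul_pos hC0 (inv_pos.2 h1q))
  refine ⟨R₀, hR₀, 1, one_pos, 1 + C * (1 - q)⁻¹, hc2pos, fun r hr hrR => ?_⟩
  set f : EuclideanSpace ℝ (Fin d) → ℝ≥0∞ :=
    fun x => ENNReal.ofReal (min 1 (‖x‖ ^ p / r ^ p)) with hf
  have hfeq : hpFun d p ν r = ∫⁻ x, f x ∂ν := rfl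
  have hrp : (0 : ℝ) < r ^ p := Real.rpow_pos_of_pos hr _
  set s : Set (EuclideanSpace ℝ (Fin d)) := {x | r < ‖x‖} with hs
  have hLeq : LFun d ν r = ν s := rfl
  have hsm : MeasurableSet s := measurableSet_lt measurable_const continuous_norm.measurable
  -- Lower bound
  have hlow : LFun d ν r ≤ hpFun d p ν r := by
    have h1 : ∀ x ∈ s, (1 : ℝ≥0∞) ≤ f x := by
      intro x hx
      have hx' : r < ‖x‖ := hx
      have hle : r ^ p ≤ ‖x‖ ^ p := Real.rpow_le_rpow hr.le hx'.le hp0.le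
      have hmin : min 1 (‖x‖ ^ p / r ^ p) = 1 := min_eq_left ((one_le_div hrp).2 hle)
      simp [hf, hmin, (one_le_div hrp).2 hle]
    calc LFun d ν r = ∫⁻ _ in s, 1 ∂ν := by rw [setLIntegral_const, one_mul]; exact hLeq
      _ ≤ ∫⁻ x in s, f x ∂ν := setLIntegral_mono' hsm h1
      _ ≤ ∫⁻ x, f x ∂ν := setLIntegral_le_lintegral _ _
  -- Upper bound pieces
  have hsplit : hpFun d p ν r = (∫⁻ x in s, f x ∂ν) + ∫⁻ x in sᶜ, f x ∂ν := by
    rw [hfeq, ← lintegral_add_compl f hsm]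
  have htail : (∫⁻ x in s, f x ∂ν) ≤ LFun d ν r := by
    calc (∫⁻ x in s, f x ∂ν) ≤ ∫⁻ _ in s, 1 ∂ν := by
          refine setLIntegral_mono' hsm (fun x _ => ?_)
          calc f x ≤ ENNReal.ofReal 1 := ENNReal.ofReal_le_ofReal (min_le_left _ _)
            _ = 1 := ENNReal.ofReal_one
      _ = LFun d ν r := by rw [setLIntegral_const, one_mul]; exact hLeq.symm
  -- annuli
  set ρ : ℕ → ℝ := fun k => r / 2 ^ k with hρ
  have hρpos : ∀ k, 0 < ρ k := fun k => div_pos hr (by positivity)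
  set Ak : ℕ → Set (EuclideanSpace ℝ (Fin d)) :=
    fun k => {x | ρ (k + 1) < ‖x‖ ∧ ‖x‖ ≤ ρ k} with hAk
  have hcover : sᶜ ⊆ {x | ‖x‖ ≤ 0} ∪ ⋃ k, Ak k := by
    intro x hx
    have hxr : ‖x‖ ≤ r := not_lt.1 hx
    rcases le_or_gt ‖x‖ 0 with h0 | h0
    · exact Or.inl h0
    · refine Or.inr (mem_iUnion.2 ?_)
      have hex : ∃ n, ρ (n + 1) < ‖x‖ := by
        obtain ⟨n, hn⟩ := exists_pow_lt_of_lt_one (div_pos h0 hr) (by norm_num : (1:ℝ)/2 < 1)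
        refine ⟨n, ?_⟩
        have h2 : (1/2:ℝ)^n * r < ‖x‖ := by
          rw [← lt_div_iff₀ hr]; exact hn
        have h3 : ρ (n+1) ≤ (1/2:ℝ)^n * r := by
          have : ρ (n+1) = (1/2:ℝ)^(n+1) * r := by
            simp only [hρ, div_pow, one_pow, div_mul_eq_mul_div, one_mul]
          rw [this]
          exact mul_le_mul_of_nonneg_right
            (pow_le_pow_of_le_one (by norm_num) (by norm_num) (Nat.le_succ n)) hr.le
        exact lt_of_le_of_lt h3 h2
      have hub : ‖x‖ ≤ ρ (Nat.find hex) := by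
        rcases Nat.eq_zero_or_pos (Nat.find hex) with h0' | hpos
        · rw [h0']; simpa [hρ] using hxr
        · obtain ⟨m, hm⟩ := Nat.exists_eq_succ_of_ne_zero hpos.ne'
          have hmin := Nat.find_min hex (m := m) (by omega)
          rw [hm]
          exact not_lt.1 hmin
      exact ⟨Nat.find hex, Nat.find_spec hex, hub⟩
  have hzero : (∫⁻ x in {x : EuclideanSpace ℝ (Fin d) | ‖x‖ ≤ 0}, f x ∂ν) = 0 := by
    have hm0 : MeasurableSet {x : EuclideanSpace ℝ (Fin d) | ‖x‖ ≤ 0} :=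
      measurableSet_le continuous_norm.measurable measurable_const
    have hb : ∀ x ∈ {x : EuclideanSpace ℝ (Fin d) | ‖x‖ ≤ 0}, f x ≤ 0 := by
      intro x hx
      have hx0 : ‖x‖ = 0 := le_antisymm hx (norm_nonneg x)
      have : f x = 0 := by
        simp [hf, hx0, Real.zero_rpow hp0.ne']
      simp [this]
    have h := setLIntegral_mono' (μ := ν) hm0 hb
    simpa using h
  -- single annulus bound
  have hterm : ∀ k : ℕ, (∫⁻ x in Ak k, f x ∂ν) ≤ ENNReal.ofReal (C * q ^ k) * LFun d ν r := by
    intro k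
    have hAkm : MeasurableSet (Ak k) := by
      have h1 : MeasurableSet {x : EuclideanSpace ℝ (Fin d) | ρ (k+1) < ‖x‖} :=
        measurableSet_lt measurable_const continuous_norm.measurable
      have h2 : MeasurableSet {x : EuclideanSpace ℝ (Fin d) | ‖x‖ ≤ ρ k} :=
        measurableSet_le continuous_norm.measurable measurable_const
      exact h1.inter h2
    have hbk : ∀ x ∈ Ak k, f x ≤ ENNReal.ofReal ((((2:ℝ)^k) ^ p)⁻¹) := by
      intro x hx
      have hx2 : ‖x‖ ≤ ρ k := hx.2
      have h2kp : (0:ℝ) < ((2:ℝ)^k) ^ p := Real.rpow_pos_of_pos (by positivity) _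
      have hle : ‖x‖ ^ p ≤ (ρ k) ^ p := Real.rpow_le_rpow (norm_nonneg x) hx2 hp0.le
      have hρk : (ρ k) ^ p / r ^ p = (((2:ℝ)^k) ^ p)⁻¹ := by
        rw [hρ]
        rw [Real.div_rpow hr.le (by positivity)]
        field_simp
      refine ENNReal.ofReal_le_ofReal ?_
      calc min 1 (‖x‖ ^ p / r ^ p) ≤ ‖x‖ ^ p / r ^ p := min_le_right _ _
        _ ≤ (ρ k) ^ p / r ^ p := by gcongr
        _ = (((2:ℝ)^k) ^ p)⁻¹ := hρk
    have hstep1 : (∫⁻ x in Ak k, f x ∂ν) ≤ ENNReal.ofReal ((((2:ℝ)^k) ^ p)⁻¹) * ν (Ak k) := by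
      calc (∫⁻ x in Ak k, f x ∂ν) ≤ ∫⁻ _ in Ak k, ENNReal.ofReal ((((2:ℝ)^k) ^ p)⁻¹) ∂ν :=
            setLIntegral_mono' hAkm hbk
        _ = ENNReal.ofReal ((((2:ℝ)^k) ^ p)⁻¹) * ν (Ak k) := setLIntegral_const _ _
    have hνAk : ν (Ak k) ≤ LFun d ν (ρ (k+1)) := measure_mono fun x hx => hx.1
    -- Matuszewska
    have h1 : 0 < ρ (k+1) := hρpos _
    have h2lt : ρ (k+1) < r := by
      rw [hρ]
      exact div_lt_self hr (one_lt_pow₀ (by norm_num : (1:ℝ) < 2) (Nat.succ_ne_zero k))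
    have hdiv : r / ρ (k+1) = (2:ℝ)^(k+1) := by
      rw [hρ]
      field_simp
    have hM := hMat (ρ (k+1)) r h1 h2lt hrR
    rw [hdiv] at hM
    set ck : ℝ := A * ((2:ℝ)^(k+1)) ^ a with hckdef
    have hck0 : 0 < ck := mul_pos hA (Real.rpow_pos_of_pos (by positivity) _)
    have hLle : LFun d ν (ρ (k+1)) ≤ (ENNReal.ofReal ck)⁻¹ * LFun d ν r := by
      have hne : ENNReal.ofReal ck ≠ 0 := (ENNReal.ofReal_pos.2 hck0).ne'
      have htop : ENNReal.ofReal ck ≠ ⊤ := ENNReal.ofReal_ne_top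
      calc LFun d ν (ρ (k+1))
          = (ENNReal.ofReal ck)⁻¹ * (ENNReal.ofReal ck * LFun d ν (ρ (k+1))) := by
            rw [← mul_assoc, ENNReal.inv_mul_cancel hne htop, one_mul]
        _ ≤ (ENNReal.ofReal ck)⁻¹ * LFun d ν r := mul_le_mul_right hM _
    have hkey : (((2:ℝ)^k) ^ p)⁻¹ * ck⁻¹ = C * q ^ k := by
      have h2 : (0:ℝ) < 2 := two_pos
      rw [hckdef, hC, hq, mul_inv, ← Real.rpow_natCast 2 k, ← Real.rpow_natCast 2 (k+1),
        ← Real.rpow_natCast ((2:ℝ) ^ (-(p+a))) k,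
        ← Real.rpow_mul h2.le, ← Real.rpow_mul h2.le, ← Real.rpow_mul h2.le,
        ← Real.rpow_neg h2.le, ← Real.rpow_neg h2.le]
      rw [show (2:ℝ)^(-((k:ℝ)*p)) * (A⁻¹ * (2:ℝ)^(-(((k+1:ℕ):ℝ)*a)))
          = A⁻¹ * ((2:ℝ)^(-((k:ℝ)*p)) * (2:ℝ)^(-(((k+1:ℕ):ℝ)*a))) from by ring,
        ← Real.rpow_add h2, mul_assoc, ← Real.rpow_add h2]
      congr 1
      push_cast
      ring
    calc (∫⁻ x in Ak k, f x ∂ν) ≤ ENNReal.ofReal ((((2:ℝ)^k) ^ p)⁻¹) * ν (Ak k) := hstep1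
      _ ≤ ENNReal.ofReal ((((2:ℝ)^k) ^ p)⁻¹) * ((ENNReal.ofReal ck)⁻¹ * LFun d ν r) :=
          mul_le_mul_right (le_trans hνAk hLle) _
      _ = ENNReal.ofReal (C * q ^ k) * LFun d ν r := by
          rw [← mul_assoc, ← ENNReal.ofReal_inv_of_pos hck0,
            ← ENNReal.ofReal_mul (by positivity), hkey]
  -- sum over annuli
  have hcompl : (∫⁻ x in sᶜ, f x ∂ν) ≤ ENNReal.ofReal (C * (1 - q)⁻¹) * LFun d ν r := by
    calc (∫⁻ x in sᶜ, f x ∂ν)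
        ≤ ∫⁻ x in {x : EuclideanSpace ℝ (Fin d) | ‖x‖ ≤ 0} ∪ ⋃ k, Ak k, f x ∂ν :=
          lintegral_mono_set hcover
      _ ≤ (∫⁻ x in {x : EuclideanSpace ℝ (Fin d) | ‖x‖ ≤ 0}, f x ∂ν)
          + ∫⁻ x in ⋃ k, Ak k, f x ∂ν := lintegral_union_le _ _ _
      _ = ∫⁻ x in ⋃ k, Ak k, f x ∂ν := by rw [hzero, zero_add]
      _ ≤ ∑' k, ∫⁻ x in Ak k, f x ∂ν := lintegral_iUnion_le _ _
      _ ≤ ∑' k, ENNReal.ofReal (C * q ^ k) * LFun d ν r := ENNReal.tsum_le_tsum hterm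
      _ = ENNReal.ofReal (C * (1 - q)⁻¹) * LFun d ν r := by
          have h1 : ∀ k : ℕ, ENNReal.ofReal (C * q ^ k) * LFun d ν r
              = ENNReal.ofReal C * ((ENNReal.ofReal q) ^ k * LFun d ν r) := by
            intro k
            rw [ENNReal.ofReal_mul hC0.le, ENNReal.ofReal_pow hq0.le, mul_assoc]
          simp_rw [h1]
          rw [ENNReal.tsum_mul_left, ENNReal.tsum_mul_right, ENNReal.tsum_geometric]
          have h2 : (1 : ℝ≥0∞) - ENNReal.ofReal q = ENNReal.ofReal (1 - q) := by
            rw [← ENNReal.ofReal_one, ← ENNReal.ofReal_sub 1 hq0.le]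
          rw [h2, ← ENNReal.ofReal_inv_of_pos h1q, ← mul_assoc,
            ← ENNReal.ofReal_mul hC0.le]
  refine ⟨by simpa using hlow, ?_⟩
  calc hpFun d p ν r = (∫⁻ x in s, f x ∂ν) + ∫⁻ x in sᶜ, f x ∂ν := hsplit
    _ ≤ LFun d ν r + ENNReal.ofReal (C * (1 - q)⁻¹) * LFun d ν r := add_le_add htail hcompl
    _ = ENNReal.ofReal (1 + C * (1 - q)⁻¹) * LFun d ν r := by
        rw [ENNReal.ofReal_add zero_le_one (mul_nonneg hC0.le (inv_nonneg.2 h1q.le)),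
          add_mul, ENNReal.ofReal_one, one_mul]
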